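/- Let C2⊥ ⊆ C4⊥ be subspaces of F_2^n, let A be a k×n binary matrix whose rows are coset representatives defining C1 = C2⊥ + rowspace(A), and set C3 = C4⊥ + rowspace(A). For all ψ^A, ψ^B ∈ F_2^k, the identity Σ_{y∈C2⊥, z∈C4⊥} |ψ^A A + y⟩ ⊗ |ψ^A A + ψ^B A + y + z⟩ = |C2⊥| · Σ_{y∈C2⊥} Σ_{z'∈C4⊥} (1/|C2⊥|) |ψ^A A + y⟩ ⊗ |(ψ^A + ψ^B)A + z'⟩ holds in the free ℚ-module on F_2^n × F_2^n. -/
import Mathlib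

open Matrix

/-- with `C2perp ⊆ C4perp` and the same coset-representative matrix `A` for both
codes, the transversal physical CNOT output equals the encoding of the logical CNOT output. -/
theorem transversal_cnot_is_logical_cnot {n k : ℕ}
    (C1 C2perp C3 C4perp : Submodule (ZMod 2) (Fin n → ZMod 2))
    (A : Matrix (Fin k) (Fin n) (ZMod 2))
    (hsub : C2perp ≤ C4perp)
    (h1 : C1 = C2perp ⊔ Submodule.span (ZMod 2) (Set.range (fun i => A i)))
    (h3 : C3 = C4perp ⊔ Submodule.span (ZMod 2) (Set.range (fun i => A i)))
    (ψA ψB : Fin k → ZMod 2) :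
    (∑ᶠ y ∈ (C2perp : Set (Fin n → ZMod 2)), ∑ᶠ z ∈ (C4perp : Set (Fin n → ZMod 2)),
        Finsupp.single ((ψA ᵥ* A + y, ψA ᵥ* A + ψB ᵥ* A + y + z) :
          (Fin n → ZMod 2) × (Fin n → ZMod 2)) (1 : ℚ)) =
    (Nat.card C2perp) •
      ∑ᶠ y ∈ (C2perp : Set (Fin n → ZMod 2)), ∑ᶠ z' ∈ (C4perp : Set (Fin n → ZMod 2)),
        ((Nat.card C2perp : ℚ)⁻¹) •
          Finsupp.single ((ψA ᵥ* A + y, (ψA + ψB) ᵥ* A + z') :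
            (Fin n → ZMod 2) × (Fin n → ZMod 2)) (1 : ℚ) := by
  classical
  have hc : (Nat.card C2perp : ℚ) ≠ 0 := by
    have : 0 < Nat.card C2perp := Nat.card_pos
    exact_mod_cast this.ne'
  have hsm : ∀ v : (Fin n → ZMod 2) × (Fin n → ZMod 2),
      (Nat.card C2perp) • ((Nat.card C2perp : ℚ)⁻¹ • Finsupp.single v (1:ℚ))
        = Finsupp.single v 1 := by
    intro v
    rw [← Nat.cast_smul_eq_nsmul ℚ, smul_smul, mul_inv_cancel₀ hc, one_smul]
  simp only [finsum_mem_eq_toFinset_sum]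
  rw [Finset.smul_sum]
  refine Finset.sum_congr rfl ?_
  intro y hy
  rw [Finset.smul_sum]
  have hyC4 : y ∈ C4perp := hsub (by simpa using hy)
  have hself : y + y = 0 := funext fun i => CharTwo.add_self_eq_zero (y i)
  refine Finset.sum_nbij' (fun z => y + z) (fun z => y + z) ?_ ?_ ?_ ?_ ?_
  · intro z hz
    simp only [Set.mem_toFinset, SetLike.mem_coe] at hz ⊢
    exact C4perp.add_mem hyC4 hz
  · intro z hz
    simp only [Set.mem_toFinset, SetLike.mem_coe] at hz ⊢
    exact C4perp.add_mem hyC4 hz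
  · intro z hz
    show y + (y + z) = z
    rw [← add_assoc, hself, zero_add]
  · intro z hz
    show y + (y + z) = z
    rw [← add_assoc, hself, zero_add]
  · intro z hz
    rw [hsm]
    congr 2
    rw [Matrix.add_vecMul]
    abel
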